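/- (Hilbert 90 for GL_n) Let E/F be a finite Galois extension with cyclic Galois group generated by σ of order 2. If A ∈ GL(n, E) satisfies A·σ(A) = 1 (σ acting entrywise), then there exists B ∈ GL(n, E) with A = B·σ(B)⁻¹. -/

import Mathlib

/-- Hilbert 90 for `GL_n`: if `E/F` is a quadratic Galois extension with
nontrivial automorphism `σ` and `A ∈ GL(n, E)` satisfies `A·σ(A) = 1`, then
`A = B·σ(B)⁻¹` for some `B ∈ GL(n, E)`. -/
theorem stmt_10 {F E : Type*} [Field F] [Field E] [Algebra F E] [IsGalois F E]
    (hdeg : Module.finrank F E = 2) (σ : E ≃ₐ[F] E) (hσ : σ ≠ AlgEquiv.refl)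
    (n : ℕ) (A : GL (Fin n) E)
    (hA : A * Units.map (RingHom.mapMatrix (σ : E →+* E)).toMonoidHom A = 1) :
    ∃ B : GL (Fin n) E,
      A = B * (Units.map (RingHom.mapMatrix (σ : E →+* E)).toMonoidHom B)⁻¹ := by
  classical
  have : FiniteDimensional F E := Module.finite_of_finrank_eq_succ hdeg
  have hcard : Fintype.card (E ≃ₐ[F] E) = 2 := by
    rw [← Nat.card_eq_fintype_card, IsGalois.card_aut_eq_finrank, hdeg]
  have hσ2 : ∀ x : E, σ (σ x) = x := by
    have h : σ * σ = 1 := by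
      have := pow_card_eq_one (G := E ≃ₐ[F] E) (x := σ)
      rwa [hcard, pow_two] at this
    intro x
    have := congrArg (fun f : E ≃ₐ[F] E => f x) h
    simpa using this
  obtain ⟨e, he⟩ : ∃ e : E, σ e ≠ e := by
    by_contra h
    push_neg at h
    exact hσ (AlgEquiv.ext fun x => h x)
  set M : Matrix (Fin n) (Fin n) E := (A : Matrix (Fin n) (Fin n) E) with hMdef
  have hM : M * M.map σ = 1 := by
    have := congrArg (Units.val) hA
    simpa using this
  -- the semilinear operator
  set T : (Fin n → E) → (Fin n → E) := fun v => M.mulVec (fun i => σ (v i)) with hT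
  have hTmap : ∀ (N : Matrix (Fin n) (Fin n) E) (w : Fin n → E),
      (fun i => σ (N.mulVec w i)) = (N.map σ).mulVec (fun i => σ (w i)) := by
    intro N w
    funext i
    simp [Matrix.mulVec, dotProduct, map_sum]
  have hTT : ∀ v, T (T v) = v := by
    intro v
    simp only [hT]
    rw [hTmap, Matrix.mulVec_mulVec, hM, Matrix.one_mulVec]
    funext i; exact hσ2 _
  have hTsmul : ∀ (c : E) (v), T (c • v) = σ c • T v := by
    intro c v
    simp only [hT]
    have : (fun i => σ ((c • v) i)) = σ c • (fun i => σ (v i)) := by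
      funext i; simp [map_mul]
    rw [this, Matrix.mulVec_smul]
  have hTadd : ∀ v w, T (v + w) = T v + T w := by
    intro v w
    simp only [hT]
    have : (fun i => σ ((v + w) i)) = (fun i => σ (v i)) + (fun i => σ (w i)) := by
      funext i; simp [map_add]
    rw [this, Matrix.mulVec_add]
  set V : Set (Fin n → E) := {v | T v = v} with hV
  have hP : ∀ (c : E) (v : Fin n → E), (c • v + σ c • T v) ∈ V := by
    intro c v
    show T _ = _
    rw [hTadd, hTsmul, hTsmul, hTT, hσ2]
    abel
  have hspan : Submodule.span E V = ⊤ := by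
    rw [eq_top_iff]
    rintro v -
    have hne : σ e - e ≠ 0 := sub_ne_zero.mpr he
    have h1 : ((1:E) • v + σ (1:E) • T v) ∈ Submodule.span E V :=
      Submodule.subset_span (hP 1 v)
    have h2 : (e • v + σ e • T v) ∈ Submodule.span E V :=
      Submodule.subset_span (hP e v)
    have hv : v = (σ e - e)⁻¹ • (σ e • ((1:E) • v + σ (1:E) • T v) - (e • v + σ e • T v)) := by
      have hcalc : σ e • ((1:E) • v + σ (1:E) • T v) - (e • v + σ e • T v) = (σ e - e) • v := by
        rw [map_one, one_smul, one_smul, smul_add, sub_smul]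
        abel
      rw [hcalc, smul_smul, inv_mul_cancel₀ hne, one_smul]
    rw [hv]
    exact Submodule.smul_mem _ _ (Submodule.sub_mem _ (Submodule.smul_mem _ _ h1) h2)
  -- extract a basis from the spanning set V
  obtain ⟨b, hbV, hbspan, hbli⟩ := exists_linearIndependent E V
  have hspanb : ⊤ ≤ Submodule.span E (Set.range ((↑) : b → (Fin n → E))) := by
    rw [Subtype.range_coe, hbspan, hspan]
  let bas : Module.Basis b E (Fin n → E) := Module.Basis.mk hbli hspanb
  haveI : Fintype b := FiniteDimensional.fintypeBasisIndex bas
  have hcardb : Fintype.card b = n := by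
    have h1 := Module.finrank_eq_card_basis bas
    rw [Module.finrank_fin_fun] at h1
    exact h1.symm
  let bas' : Module.Basis (Fin n) E (Fin n → E) := bas.reindex (Fintype.equivFinOfCardEq hcardb)
  have hbas'V : ∀ j, bas' j ∈ V := by
    intro j
    have : bas' j = ((Fintype.equivFinOfCardEq hcardb).symm j : Fin n → E) := by
      rw [Module.Basis.reindex_apply, Module.Basis.mk_apply]
    rw [this]
    exact hbV ((Fintype.equivFinOfCardEq hcardb).symm j).2
  set Bmat : Matrix (Fin n) (Fin n) E := (Pi.basisFun E (Fin n)).toMatrix bas' with hBmat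
  have hBentry : ∀ i j, Bmat i j = bas' j i := by
    intro i j
    rw [hBmat, Module.Basis.toMatrix_apply, Pi.basisFun_repr]
  haveI : Invertible Bmat := (Pi.basisFun E (Fin n)).invertibleToMatrix bas'
  have hrel : M * Bmat.map σ = Bmat := by
    ext i j
    have hmem : T (bas' j) = bas' j := hbas'V j
    have : (M * Bmat.map σ) i j = T (bas' j) i := by
      simp only [hT, Matrix.mul_apply, Matrix.mulVec, dotProduct, Matrix.map_apply,
        hBentry]
    rw [this, hmem, hBentry]
  refine ⟨(unitOfInvertible Bmat : (Matrix (Fin n) (Fin n) E)ˣ), ?_⟩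
  rw [eq_mul_inv_iff_mul_eq]
  ext : 1
  show M * _ = Bmat
  simpa using hrel
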